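/- For j, m ∈ ℤ_{≥0}, the linear form ⟨(a⁺)^j k^m⟩₁₁ = ⟨χ̄₁(x)|(a⁺)^j k^m|χ₁(1)⟩ / ⟨χ̄₁(x)|χ₁(1)⟩ equals x^j p^{m/2} (-p;p)_j (x;p)_m / (-px;p)_{j+m}. -/

import Mathlib

noncomputable def aPlus (p : ℝ) (v : ℕ → ℂ) : ℕ → ℂ := fun m =>
  match m with
  | 0 => 0
  | Nat.succ m => ((Real.sqrt (1 - p ^ (2 * m + 2)) : ℝ) : ℂ) * v m

noncomputable def kOp (p : ℝ) (v : ℕ → ℂ) : ℕ → ℂ := fun m =>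
  ((p : ℂ) ^ m * ((Real.sqrt p : ℝ) : ℂ)) * v m

noncomputable def qPoch (a q : ℝ) (m : ℕ) : ℝ := ∏ i ∈ Finset.range m, (1 - a * q ^ i)

/-- Coefficients of `|χ₁(x)⟩ = (x a⁺;p)_∞^{-1}|0⟩`; the dual vector
`⟨χ̄₁(x)| = ⟨0|(x a⁻;p)_∞^{-1}` has the same coefficients. -/
noncomputable def chi1 (p x : ℝ) : ℕ → ℂ := fun m =>
  (x : ℂ) ^ m * ((Real.sqrt (qPoch (p ^ 2) (p ^ 2) m) : ℝ) : ℂ) / ((qPoch p p m : ℝ) : ℂ)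

/-- The Fock-space pairing `⟨f|g⟩ = Σ_n f_n g_n`. -/
noncomputable def pairF (f g : ℕ → ℂ) : ℂ := ∑' n : ℕ, f n * g n

namespace Bracket11Aux

open Filter Finset

lemma qPoch_succ (a q : ℝ) (n : ℕ) : qPoch a q (n + 1) = qPoch a q n * (1 - a * q ^ n) :=
  Finset.prod_range_succ _ _

lemma qPoch_zero (a q : ℝ) : qPoch a q 0 = 1 := rfl

lemma qPoch_add (a q : ℝ) (m k : ℕ) :
    qPoch a q (m + k) = qPoch a q m * ∏ i ∈ Finset.range k, (1 - a * q ^ (m + i)) := by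
  rw [qPoch, Finset.prod_range_add]
  congr 1

lemma qPoch_pos {a q : ℝ} (h : ∀ i : ℕ, a * q ^ i < 1) (n : ℕ) : 0 < qPoch a q n :=
  Finset.prod_pos fun i _ => by linarith [h i]

section P
variable {p : ℝ} (hp : 0 < p) (hp1 : p < 1)
include hp hp1

lemma hfac (i : ℕ) : p * p ^ i < 1 := by
  have h1 : p ^ i ≤ 1 := pow_le_one₀ hp.le hp1.le
  nlinarith

lemma qP_pos (n : ℕ) : 0 < qPoch p p n := qPoch_pos (hfac hp hp1) n

lemma qN_pos (n : ℕ) : 0 < qPoch (-p) p n := by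
  refine qPoch_pos (fun i => ?_) n
  have : 0 < p ^ i := pow_pos hp i
  nlinarith

lemma qX_pos {x : ℝ} (hx : 0 < x) (hx1 : x < 1) (n : ℕ) : 0 < qPoch x p n := by
  refine qPoch_pos (fun i => ?_) n
  have h1 : p ^ i ≤ 1 := pow_le_one₀ hp.le hp1.le
  nlinarith

lemma qPX_pos {x : ℝ} (hx : 0 < x) (n : ℕ) : 0 < qPoch (-(p * x)) p n := by
  refine qPoch_pos (fun i => ?_) n
  nlinarith [mul_pos (mul_pos hp hx) (pow_pos hp i)]

/-- `(p²;p²)_n = (p;p)_n (-p;p)_n`. -/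
lemma qPsq (n : ℕ) : qPoch (p ^ 2) (p ^ 2) n = qPoch p p n * qPoch (-p) p n := by
  rw [qPoch, qPoch, qPoch, ← Finset.prod_mul_distrib]
  exact Finset.prod_congr rfl fun i _ => by ring

end P

/-- The coefficient `(-p;p)_{j+s} / (p;p)_s`. -/
noncomputable def cc (p : ℝ) (j s : ℕ) : ℝ := qPoch (-p) p (j + s) / qPoch p p s

/-- The series `T j z = Σ_s (-p;p)_{j+s}/(p;p)_s z^s`. -/
noncomputable def T (p : ℝ) (j : ℕ) (z : ℝ) : ℝ := ∑' s : ℕ, cc p j s * z ^ s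

section Main
variable {p x : ℝ} (hp : 0 < p) (hp1 : p < 1)
include hp hp1

lemma cc_pos (j s : ℕ) : 0 < cc p j s :=
  div_pos (qN_pos hp hp1 _) (qP_pos hp hp1 _)

lemma cc_succ_left (j s : ℕ) : cc p (j + 1) s = cc p j s * (1 + p ^ (j + s + 1)) := by
  unfold cc
  have : j + 1 + s = (j + s) + 1 := by omega
  rw [this, qPoch_succ]
  have : -(-p * p ^ (j + s)) = p ^ (j + s + 1) := by ring
  field_simp
  ring_nf

lemma cc_mul (j s : ℕ) : cc p j (s + 1) * (1 - p ^ (s + 1)) = cc p (j + 1) s := by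
  unfold cc
  have h1 : j + (s + 1) = (j + 1) + s := by omega
  rw [h1, qPoch_succ p p s]
  have hs : qPoch p p s ≠ 0 := (qP_pos hp hp1 s).ne'
  have hs1 : 1 - p * p ^ s ≠ 0 := by have := hfac hp hp1 s; linarith
  have hpow : p * p ^ s = p ^ (s + 1) := by ring
  rw [← hpow]
  field_simp

lemma cc_succ_right (j s : ℕ) :
    cc p j (s + 1) = cc p j s * (1 + p ^ (j + s + 1)) / (1 - p ^ (s + 1)) := by
  have h1 : 1 - p ^ (s + 1) ≠ 0 := by
    have := hfac hp hp1 s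
    have : p ^ (s + 1) < 1 := by rw [pow_succ, mul_comm]; exact this
    linarith
  rw [← cc_succ_left hp hp1, ← cc_mul hp hp1 j s]
  field_simp

lemma summable_T {z : ℝ} (hz0 : 0 < z) (hz1 : z < 1) (j : ℕ) :
    Summable (fun s : ℕ => cc p j s * z ^ s) := by
  have hpos : ∀ s : ℕ, 0 < cc p j s * z ^ s := fun s =>
    mul_pos (cc_pos hp hp1 j s) (pow_pos hz0 s)
  apply summable_of_ratio_test_tendsto_lt_one hz1
    (Filter.Eventually.of_forall fun s => (hpos s).ne')
  have hratio : ∀ s : ℕ,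
      ‖cc p j (s + 1) * z ^ (s + 1)‖ / ‖cc p j s * z ^ s‖ =
        z * (1 + p ^ (j + 1) * p ^ s) / (1 - p * p ^ s) := by
    intro s
    have h1 : 0 < 1 - p * p ^ s := by have := hfac hp hp1 s; linarith
    rw [Real.norm_eq_abs, Real.norm_eq_abs, abs_of_pos (hpos (s + 1)), abs_of_pos (hpos s),
      cc_succ_right hp hp1 j s]
    have hcc : cc p j s ≠ 0 := (cc_pos hp hp1 j s).ne'
    have hzz : z ^ s ≠ 0 := (pow_pos hz0 s).ne'
    have e1 : p ^ (j + s + 1) = p ^ (j + 1) * p ^ s := by rw [← pow_add]; ring_nf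
    have e2 : p ^ (s + 1) = p * p ^ s := by ring
    rw [e1, e2]
    field_simp
    ring
  rw [show (fun s : ℕ => ‖cc p j (s+1) * z ^ (s+1)‖ / ‖cc p j s * z ^ s‖) =
      (fun s : ℕ => z * (1 + p ^ (j + 1) * p ^ s) / (1 - p * p ^ s)) from funext hratio]
  have hpow : Tendsto (fun s : ℕ => (p : ℝ) ^ s) atTop (nhds 0) :=
    tendsto_pow_atTop_nhds_zero_of_lt_one hp.le hp1
  have hnum : Tendsto (fun s : ℕ => z * (1 + p ^ (j + 1) * p ^ s)) atTop (nhds (z * (1 + p ^ (j+1) * 0))) :=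
    (tendsto_const_nhds.add (hpow.const_mul _)).const_mul z
  have hden : Tendsto (fun s : ℕ => 1 - p * p ^ s) atTop (nhds (1 - p * 0)) :=
    tendsto_const_nhds.sub (hpow.const_mul _)
  have := hnum.div hden (by norm_num)
  simpa [Pi.div_def] using this

/-- Relation (A): `T (j+1) z = T j z + p^(j+1) T j (pz)`. -/
lemma relA {z : ℝ} (hz0 : 0 < z) (hz1 : z < 1) (j : ℕ) :
    T p (j + 1) z = T p j z + p ^ (j + 1) * T p j (p * z) := by
  have hpz0 : 0 < p * z := mul_pos hp hz0
  have hpz1 : p * z < 1 := by nlinarith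
  have h1 := summable_T hp hp1 hz0 hz1 j
  have h2 := summable_T hp hp1 hpz0 hpz1 j
  unfold T
  rw [show (fun s : ℕ => cc p (j+1) s * z ^ s) =
      (fun s : ℕ => cc p j s * z ^ s + p ^ (j+1) * (cc p j s * (p * z) ^ s)) from ?_]
  · rw [Summable.tsum_add h1 (h2.mul_left _), (h2.tsum_mul_left _)]
  · funext s
    rw [cc_succ_left hp hp1, mul_pow]
    have : p ^ (j + s + 1) = p ^ (j + 1) * p ^ s := by rw [← pow_add]; ring_nf
    rw [this]; ring

/-- Relation (B): `T j z - T j (pz) = z * T (j+1) z`. -/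
lemma relB {z : ℝ} (hz0 : 0 < z) (hz1 : z < 1) (j : ℕ) :
    T p j z - T p j (p * z) = z * T p (j + 1) z := by
  have hpz0 : 0 < p * z := mul_pos hp hz0
  have hpz1 : p * z < 1 := by nlinarith
  have h1 := summable_T hp hp1 hz0 hz1 j
  have h2 := summable_T hp hp1 hpz0 hpz1 j
  have h3 := summable_T hp hp1 hz0 hz1 (j + 1)
  unfold T
  rw [← Summable.tsum_sub h1 h2]
  set g : ℕ → ℝ := fun s => cc p j s * z ^ s - cc p j s * (p * z) ^ s with hg
  have hgs : Summable g := h1.sub h2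
  have hstep : ∀ s : ℕ, g (s + 1) = z * (cc p (j + 1) s * z ^ s) := by
    intro s
    have := cc_mul hp hp1 j s
    have hms : (p * z) ^ (s + 1) = p ^ (s+1) * z ^ (s+1) := mul_pow _ _ _
    simp only [hg, hms]
    calc cc p j (s+1) * z ^ (s+1) - cc p j (s+1) * (p ^ (s+1) * z ^ (s+1))
        = (cc p j (s+1) * (1 - p ^ (s+1))) * z ^ (s+1) := by ring
      _ = cc p (j+1) s * z ^ (s+1) := by rw [this]
      _ = z * (cc p (j+1) s * z ^ s) := by rw [pow_succ]; ring
  rw [Summable.tsum_eq_zero_add hgs]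
  have hg0 : g 0 = 0 := by simp [hg]
  rw [hg0, zero_add]
  calc ∑' s : ℕ, g (s + 1) = ∑' s : ℕ, z * (cc p (j+1) s * z ^ s) := by
        exact tsum_congr hstep
    _ = z * ∑' s : ℕ, cc p (j+1) s * z ^ s := h3.tsum_mul_left z

/-- Relation (C): `(1 + p^(j+1) z) T (j+1) z = (1 + p^(j+1)) T j z`. -/
lemma relC {z : ℝ} (hz0 : 0 < z) (hz1 : z < 1) (j : ℕ) :
    (1 + p ^ (j + 1) * z) * T p (j + 1) z = (1 + p ^ (j + 1)) * T p j z := by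
  have hA := relA hp hp1 hz0 hz1 j
  have hB := relB hp hp1 hz0 hz1 j
  linear_combination hA - p ^ (j + 1) * hB

/-- Relation (D): `(1 - z) T j z = (1 + p^(j+1) z) T j (pz)`. -/
lemma relD {z : ℝ} (hz0 : 0 < z) (hz1 : z < 1) (j : ℕ) :
    (1 - z) * T p j z = (1 + p ^ (j + 1) * z) * T p j (p * z) := by
  have hA := relA hp hp1 hz0 hz1 j
  have hB := relB hp hp1 hz0 hz1 j
  linear_combination z * hA + hB

variable (hx : 0 < x) (hx1 : x < 1)
include hx hx1

lemma hzm (m : ℕ) : 0 < p ^ m * x ∧ p ^ m * x < 1 := by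
  constructor
  · exact mul_pos (pow_pos hp m) hx
  · have h1 : p ^ m ≤ 1 := pow_le_one₀ hp.le hp1.le
    nlinarith

/-- Descend in `z`: `T 0 (p^m x) (-px;p)_m = (x;p)_m T 0 x`. -/
lemma descend (m : ℕ) :
    T p 0 (p ^ m * x) * qPoch (-(p * x)) p m = qPoch x p m * T p 0 x := by
  induction m with
  | zero => simp [qPoch_zero]
  | succ m ih =>
    obtain ⟨hz0, hz1⟩ := hzm hp hp1 hx hx1 m
    have hD := relD hp hp1 hz0 hz1 0
    have e1 : p * (p ^ m * x) = p ^ (m + 1) * x := by ring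
    rw [e1] at hD
    rw [qPoch_succ, qPoch_succ]
    have e2 : 1 - -(p * x) * p ^ m = 1 + p ^ (0 + 1) * (p ^ m * x) := by ring
    have e3 : 1 - x * p ^ m = 1 - p ^ m * x := by ring
    calc T p 0 (p ^ (m+1) * x) * (qPoch (-(p*x)) p m * (1 - -(p*x) * p ^ m))
        = ((1 + p ^ (0+1) * (p ^ m * x)) * T p 0 (p ^ (m+1) * x)) * qPoch (-(p*x)) p m := by
          rw [← e2]; ring
      _ = ((1 - (p ^ m * x)) * T p 0 (p ^ m * x)) * qPoch (-(p*x)) p m := by rw [← hD]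
      _ = (1 - p ^ m * x) * (T p 0 (p ^ m * x) * qPoch (-(p*x)) p m) := by ring
      _ = (1 - p ^ m * x) * (qPoch x p m * T p 0 x) := by rw [ih]
      _ = qPoch x p m * (1 - x * p ^ m) * T p 0 x := by rw [e3]; ring

/-- Ascend in `j`: `T j z (-pz;p)_j = (-p;p)_j T 0 z`. -/
lemma ascend {z : ℝ} (hz0 : 0 < z) (hz1 : z < 1) (j : ℕ) :
    T p j z * qPoch (-(p * z)) p j = qPoch (-p) p j * T p 0 z := by
  induction j with
  | zero => simp [qPoch_zero]
  | succ j ih =>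
    have hC := relC hp hp1 hz0 hz1 j
    rw [qPoch_succ, qPoch_succ]
    have e1 : 1 - -(p * z) * p ^ j = 1 + p ^ (j + 1) * z := by ring
    have e2 : 1 - -p * p ^ j = 1 + p ^ (j + 1) := by ring
    rw [e1, e2]
    calc T p (j+1) z * (qPoch (-(p*z)) p j * (1 + p ^ (j+1) * z))
        = ((1 + p ^ (j+1) * z) * T p (j+1) z) * qPoch (-(p*z)) p j := by ring
      _ = ((1 + p ^ (j+1)) * T p j z) * qPoch (-(p*z)) p j := by rw [hC]
      _ = (1 + p ^ (j+1)) * (T p j z * qPoch (-(p*z)) p j) := by ring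
      _ = (1 + p ^ (j+1)) * (qPoch (-p) p j * T p 0 z) := by rw [ih]
      _ = qPoch (-p) p j * (1 + p ^ (j+1)) * T p 0 z := by ring

/-- The key identity. -/
lemma key (j m : ℕ) :
    T p j (p ^ m * x) * qPoch (-(p * x)) p (j + m) =
      qPoch (-p) p j * qPoch x p m * T p 0 x := by
  obtain ⟨hz0, hz1⟩ := hzm hp hp1 hx hx1 m
  have hsplit : qPoch (-(p * x)) p (j + m) =
      qPoch (-(p * x)) p m * qPoch (-(p * (p ^ m * x))) p j := by
    rw [show j + m = m + j from by omega, qPoch_add]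
    congr 1
    rw [qPoch]
    refine Finset.prod_congr rfl fun i _ => ?_
    have : p ^ (m + i) = p ^ m * p ^ i := pow_add p m i
    rw [this]; ring
  rw [hsplit]
  calc T p j (p ^ m * x) * (qPoch (-(p*x)) p m * qPoch (-(p * (p ^ m * x))) p j)
      = (T p j (p ^ m * x) * qPoch (-(p * (p ^ m * x))) p j) * qPoch (-(p*x)) p m := by ring
    _ = (qPoch (-p) p j * T p 0 (p ^ m * x)) * qPoch (-(p*x)) p m := by
        rw [ascend hp hp1 hx hx1 hz0 hz1]
    _ = qPoch (-p) p j * (T p 0 (p ^ m * x) * qPoch (-(p*x)) p m) := by ring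
    _ = qPoch (-p) p j * (qPoch x p m * T p 0 x) := by rw [descend hp hp1 hx hx1]
    _ = qPoch (-p) p j * qPoch x p m * T p 0 x := by ring

lemma T_pos : 0 < T p 0 x := by
  have hs := summable_T hp hp1 hx hx1 0
  have h0 : (1 : ℝ) ≤ T p 0 x := by
    have h00 : cc p 0 0 * x ^ 0 = 1 := by simp [cc, qPoch_zero]
    have := Summable.le_tsum hs 0 fun i _ =>
      (mul_pos (cc_pos hp hp1 0 i) (pow_pos hx i)).le
    rw [h00] at this
    exact this
  linarith

end Main

section Ops

variable (p : ℝ)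

lemma kOp_iter (v : ℕ → ℂ) (m n : ℕ) :
    (kOp p)^[m] v n = ((p : ℂ) ^ n * ((Real.sqrt p : ℝ) : ℂ)) ^ m * v n := by
  induction m with
  | zero => simp
  | succ m ih =>
    rw [Function.iterate_succ_apply', kOp, ih, pow_succ]
    ring

lemma aPlus_iter_lt (v : ℕ → ℂ) : ∀ j n : ℕ, n < j → (aPlus p)^[j] v n = 0 := by
  intro j
  induction j with
  | zero => omega
  | succ j ih =>
    intro n hn
    rw [Function.iterate_succ_apply']
    match n with
    | 0 => rfl
    | Nat.succ k =>
      show ((Real.sqrt (1 - p ^ (2 * k + 2)) : ℝ) : ℂ) * ((aPlus p)^[j] v) k = 0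
      rw [ih k (by omega), mul_zero]

lemma aPlus_iter (v : ℕ → ℂ) (j s : ℕ) :
    (aPlus p)^[j] v (j + s) =
      (∏ i ∈ Finset.range j, ((Real.sqrt (1 - p ^ (2 * (s + i) + 2)) : ℝ) : ℂ)) * v s := by
  induction j with
  | zero => simp
  | succ j ih =>
    rw [Function.iterate_succ_apply']
    have : j + 1 + s = Nat.succ (j + s) := by omega
    rw [this]
    show ((Real.sqrt (1 - p ^ (2 * (j + s) + 2)) : ℝ) : ℂ) * ((aPlus p)^[j] v) (j + s) = _
    rw [ih, Finset.prod_range_succ]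
    have : 2 * (s + j) + 2 = 2 * (j + s) + 2 := by omega
    rw [this]
    ring

end Ops

section PairF

variable {p x : ℝ} (hp : 0 < p) (hp1 : p < 1) (hx : 0 < x) (hx1 : x < 1)
include hp hp1 hx hx1

omit hp hp1 hx hx1 in
lemma prod_sqrt (n : ℕ) (f : ℕ → ℝ) (h : ∀ i, 0 ≤ f i) :
    ∏ i ∈ Finset.range n, Real.sqrt (f i) = Real.sqrt (∏ i ∈ Finset.range n, f i) := by
  induction n with
  | zero => simp
  | succ n ih =>
    rw [Finset.prod_range_succ, Finset.prod_range_succ, ih,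
      ← Real.sqrt_mul (Finset.prod_nonneg fun i _ => h i)]

lemma term_eq (j m s : ℕ) :
    chi1 p x (j + s) * ((aPlus p)^[j] ((kOp p)^[m] (chi1 p 1))) (j + s) =
      (((Real.sqrt p ^ m * x ^ j * (cc p j s * ((p ^ m * x) ^ s)) : ℝ)) : ℂ) := by
  rw [aPlus_iter, kOp_iter]
  have hApos : ∀ n : ℕ, 0 ≤ qPoch (p^2) (p^2) n := fun n =>
    (qPoch_pos (a := p^2) (q := p^2) (fun i => by
      have h2 : p^2 < 1 := by nlinarith
      have h3 : ((p^2) : ℝ) ^ i ≤ 1 := pow_le_one₀ (by positivity) h2.le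
      nlinarith [sq_nonneg p]) n).le
  have hDnonneg : ∀ i : ℕ, (0:ℝ) ≤ 1 - p ^ (2 * (s + i) + 2) := by
    intro i
    have : p ^ (2 * (s + i) + 2) < 1 := pow_lt_one₀ hp.le hp1 (by omega)
    linarith
  -- product of square roots is square root of product
  have hsqrtprod : (∏ i ∈ Finset.range j, Real.sqrt (1 - p ^ (2 * (s + i) + 2))) =
      Real.sqrt (∏ i ∈ Finset.range j, (1 - p ^ (2 * (s + i) + 2))) :=
    prod_sqrt j _ hDnonneg
  -- `(p²;p²)_s * ∏ = (p²;p²)_{s+j}`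
  have hsplit : qPoch (p^2) (p^2) s * (∏ i ∈ Finset.range j, (1 - p ^ (2 * (s + i) + 2))) =
      qPoch (p^2) (p^2) (s + j) := by
    rw [qPoch_add]
    congr 1
    refine Finset.prod_congr rfl fun i _ => ?_
    congr 1
    rw [← pow_mul, ← pow_add]
    congr 1
    omega
  have hcombine : Real.sqrt (qPoch (p^2) (p^2) (j+s)) *
      ((∏ i ∈ Finset.range j, Real.sqrt (1 - p ^ (2 * (s + i) + 2))) *
        Real.sqrt (qPoch (p^2) (p^2) s)) = qPoch (p^2) (p^2) (j+s) := by
    rw [hsqrtprod, ← Real.sqrt_mul (Finset.prod_nonneg fun i _ => hDnonneg i), mul_comm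
      (∏ i ∈ Finset.range j, (1 - p ^ (2 * (s + i) + 2))) (qPoch (p^2) (p^2) s), hsplit,
      show s + j = j + s from by omega, Real.mul_self_sqrt (hApos (j+s))]
  have hPjs : qPoch p p (j+s) ≠ 0 := (qP_pos hp hp1 (j+s)).ne'
  have hPs : qPoch p p s ≠ 0 := (qP_pos hp hp1 s).ne'
  have hAeq : qPoch (p^2) (p^2) (j+s) = qPoch p p (j+s) * qPoch (-p) p (j+s) :=
    qPsq hp hp1 (j+s)
  -- the real identity
  have hreal : (x ^ (j+s) * Real.sqrt (qPoch (p^2) (p^2) (j+s)) / qPoch p p (j+s)) *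
      ((∏ i ∈ Finset.range j, Real.sqrt (1 - p ^ (2 * (s + i) + 2))) *
        ((p ^ s * Real.sqrt p) ^ m *
          ((1:ℝ) ^ s * Real.sqrt (qPoch (p^2) (p^2) s) / qPoch p p s))) =
      Real.sqrt p ^ m * x ^ j * (cc p j s * ((p ^ m * x) ^ s)) := by
    simp only [cc]
    calc (x ^ (j+s) * Real.sqrt (qPoch (p^2) (p^2) (j+s)) / qPoch p p (j+s)) *
        ((∏ i ∈ Finset.range j, Real.sqrt (1 - p ^ (2 * (s + i) + 2))) *
          ((p ^ s * Real.sqrt p) ^ m *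
            ((1:ℝ) ^ s * Real.sqrt (qPoch (p^2) (p^2) s) / qPoch p p s)))
        = (x ^ j * x ^ s * p ^ (s * m) * Real.sqrt p ^ m *
            (Real.sqrt (qPoch (p^2) (p^2) (j+s)) *
              ((∏ i ∈ Finset.range j, Real.sqrt (1 - p ^ (2 * (s + i) + 2))) *
                Real.sqrt (qPoch (p^2) (p^2) s)))) /
            (qPoch p p (j+s) * qPoch p p s) := by
          rw [pow_add x j s]
          field_simp
          ring
      _ = (x ^ j * x ^ s * p ^ (s * m) * Real.sqrt p ^ m *
            (qPoch p p (j+s) * qPoch (-p) p (j+s))) / (qPoch p p (j+s) * qPoch p p s) := by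
          rw [hcombine, hAeq]
      _ = Real.sqrt p ^ m * x ^ j * (qPoch (-p) p (j+s) / qPoch p p s * (p ^ m * x) ^ s) := by
          field_simp
          rw [mul_pow, ← pow_mul, mul_comm m s]
          ring
  calc chi1 p x (j + s) *
      ((∏ i ∈ Finset.range j, ((Real.sqrt (1 - p ^ (2 * (s + i) + 2)) : ℝ) : ℂ)) *
        (((p:ℂ) ^ s * ((Real.sqrt p : ℝ) : ℂ)) ^ m * chi1 p 1 s))
      = ((((x ^ (j+s) * Real.sqrt (qPoch (p^2) (p^2) (j+s)) / qPoch p p (j+s)) *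
          ((∏ i ∈ Finset.range j, Real.sqrt (1 - p ^ (2 * (s + i) + 2))) *
            ((p ^ s * Real.sqrt p) ^ m *
              ((1:ℝ) ^ s * Real.sqrt (qPoch (p^2) (p^2) s) / qPoch p p s)))) : ℝ) : ℂ) := by
        rw [chi1, chi1]
        push_cast
        ring
    _ = _ := by rw [hreal]

lemma pairF_eq (j m : ℕ) :
    pairF (chi1 p x) ((aPlus p)^[j] ((kOp p)^[m] (chi1 p 1))) =
      (((Real.sqrt p ^ m * x ^ j * T p j (p ^ m * x) : ℝ)) : ℂ) := by
  obtain ⟨hz0, hz1⟩ := hzm hp hp1 hx hx1 m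
  rw [pairF]
  set F : ℕ → ℂ := fun n => chi1 p x n * ((aPlus p)^[j] ((kOp p)^[m] (chi1 p 1))) n with hF
  have hshift : ∑' s : ℕ, F (j + s) = ∑' n : ℕ, F n := by
    apply Function.Injective.tsum_eq (add_right_injective j)
    intro n hn
    rcases le_or_gt j n with h | h
    · exact ⟨n - j, by show j + (n - j) = n; omega⟩
    · exact absurd (show F n = 0 by
        simp only [hF]; rw [aPlus_iter_lt p _ j n h, mul_zero]) hn
  rw [← hshift]
  have hterm : ∀ s : ℕ, F (j + s) =
      (((Real.sqrt p ^ m * x ^ j * (cc p j s * ((p ^ m * x) ^ s)) : ℝ)) : ℂ) := fun s =>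
    term_eq hp hp1 hx hx1 j m s
  calc ∑' s : ℕ, F (j + s)
      = ∑' s : ℕ, (((Real.sqrt p ^ m * x ^ j * (cc p j s * ((p ^ m * x) ^ s)) : ℝ)) : ℂ) :=
        tsum_congr hterm
    _ = (((∑' s : ℕ, Real.sqrt p ^ m * x ^ j * (cc p j s * ((p ^ m * x) ^ s)) : ℝ)) : ℂ) :=
        (Complex.ofReal_tsum _).symm
    _ = (((Real.sqrt p ^ m * x ^ j * ∑' s : ℕ, (cc p j s * ((p ^ m * x) ^ s)) : ℝ)) : ℂ) := by
        rw [tsum_mul_left]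
    _ = _ := by rw [T]

end PairF

end Bracket11Aux

open Bracket11Aux in
/-- `⟨(a⁺)^j k^m⟩₁₁ = x^j p^{m/2} (-p;p)_j (x;p)_m / (-px;p)_{j+m}`. -/
theorem bracket11_aPlus (p x : ℝ) (hp : 0 < p) (hp1 : p < 1) (hx : 0 < x) (hx1 : x < 1)
    (j m : ℕ) :
    pairF (chi1 p x) ((aPlus p)^[j] ((kOp p)^[m] (chi1 p 1))) /
        pairF (chi1 p x) (chi1 p 1) =
      (x : ℂ) ^ j * ((Real.sqrt p : ℝ) : ℂ) ^ m *
        ((qPoch (-p) p j : ℝ) : ℂ) * ((qPoch x p m : ℝ) : ℂ) /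
        ((qPoch (-(p * x)) p (j + m) : ℝ) : ℂ) := by
  have hden : pairF (chi1 p x) (chi1 p 1) = ((T p 0 x : ℝ) : ℂ) := by
    have := pairF_eq hp hp1 hx hx1 0 0
    simpa using this
  rw [pairF_eq hp hp1 hx hx1 j m, hden]
  have hT0 : (0:ℝ) < T p 0 x := T_pos hp hp1 hx hx1
  have hQ : (0:ℝ) < qPoch (-(p * x)) p (j + m) := qPX_pos hp hp1 hx (j + m)
  have hkey := key hp hp1 hx hx1 j m
  have hreal : Real.sqrt p ^ m * x ^ j * T p j (p ^ m * x) / T p 0 x =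
      x ^ j * Real.sqrt p ^ m * qPoch (-p) p j * qPoch x p m / qPoch (-(p * x)) p (j + m) := by
    rw [div_eq_div_iff hT0.ne' hQ.ne']
    calc Real.sqrt p ^ m * x ^ j * T p j (p ^ m * x) * qPoch (-(p * x)) p (j + m)
        = Real.sqrt p ^ m * x ^ j *
            (T p j (p ^ m * x) * qPoch (-(p * x)) p (j + m)) := by ring
      _ = Real.sqrt p ^ m * x ^ j * (qPoch (-p) p j * qPoch x p m * T p 0 x) := by rw [hkey]
      _ = x ^ j * Real.sqrt p ^ m * qPoch (-p) p j * qPoch x p m * T p 0 x := by ring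
  calc (((Real.sqrt p ^ m * x ^ j * T p j (p ^ m * x) : ℝ)) : ℂ) / ((T p 0 x : ℝ) : ℂ)
      = (((Real.sqrt p ^ m * x ^ j * T p j (p ^ m * x) / T p 0 x : ℝ)) : ℂ) := by
        push_cast; ring
    _ = (((x ^ j * Real.sqrt p ^ m * qPoch (-p) p j * qPoch x p m /
          qPoch (-(p * x)) p (j + m) : ℝ)) : ℂ) := by rw [hreal]
    _ = _ := by push_cast; ring
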